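/- Let R be a ring, S a subring, and C a pure acyclic chain complex of right S-modules (i.e., C ⊗_S A is acyclic for every left S-module A). If P is a left R-module that is a direct summand of a module of the form R ⊗_S A for some left S-module A, then the complex C ⊗_R P is acyclic. -/

import Mathlib

/-!
STATEMENT 8: Let `R` be a ring, `S` a subring, and `C` a pure acyclic chain complex of right
`S`-modules (i.e. `C ⊗_S A` is acyclic for every left `S`-module `A`); here `C` is a complex
of right `R`-modules regarded as `S`-modules by restriction.  If `P` is a left `R`-module
that is a direct summand of a module of the form `R ⊗_S A` for some left `S`-module `A`,
then `C ⊗_R P` is acyclic.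

Since Mathlib has no tensor product over noncommutative rings, we construct the tensor
product `Tens S M A` of a right `S`-module and a left `S`-module by generators and
relations, and `R ⊗_S A` is encoded by its universal property.
-/

noncomputable section

universe u

variable (S : Type u) [Ring S]

/-- The relations defining the tensor product `M ⊗_S A` of a right `S`-module `M` and a
left `S`-module `A`: biadditivity and `S`-balancedness. -/
def tensRels (M : Type u) [AddCommGroup M] [Module Sᵐᵒᵖ M]
    (A : Type u) [AddCommGroup A] [Module S A] :
    AddSubgroup (FreeAbelianGroup (M × A)) :=
  AddSubgroup.closure
    ({x | ∃ m m' a, x = FreeAbelianGroup.of (m + m', a) - FreeAbelianGroup.of (m, a)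
        - FreeAbelianGroup.of (m', a)} ∪
     {x | ∃ m a a', x = FreeAbelianGroup.of (m, a + a') - FreeAbelianGroup.of (m, a)
        - FreeAbelianGroup.of (m, a')} ∪
     {x | ∃ (m : M) (s : S) (a : A),
        x = FreeAbelianGroup.of (MulOpposite.op s • m, a) - FreeAbelianGroup.of (m, s • a)})

/-- The tensor product `M ⊗_S A` of a right `S`-module `M` and a left `S`-module `A`,
as an abelian group. -/
abbrev Tens (M : Type u) [AddCommGroup M] [Module Sᵐᵒᵖ M]
    (A : Type u) [AddCommGroup A] [Module S A] : Type u :=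
  FreeAbelianGroup (M × A) ⧸ tensRels S M A

/-- Functoriality of `Tens` in the right-module variable: `f ⊗ id`. -/
def Tens.map {M M' : Type u} [AddCommGroup M] [Module Sᵐᵒᵖ M] [AddCommGroup M']
    [Module Sᵐᵒᵖ M'] (f : M →ₗ[Sᵐᵒᵖ] M')
    (A : Type u) [AddCommGroup A] [Module S A] :
    Tens S M A →+ Tens S M' A :=
  QuotientAddGroup.lift _
    ((QuotientAddGroup.mk' (tensRels S M' A)).comp
      (FreeAbelianGroup.lift fun p => FreeAbelianGroup.of (f p.1, p.2)))
    (by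
      intro x hx
      have hle : tensRels S M A ≤
          ((QuotientAddGroup.mk' (tensRels S M' A)).comp
            (FreeAbelianGroup.lift fun p : M × A =>
              FreeAbelianGroup.of (f p.1, p.2))).ker := by
        apply AddSubgroup.closure_le _ |>.mpr
        rintro y ((⟨m, m', a, rfl⟩ | ⟨m, a, a', rfl⟩) | ⟨m, s, a, rfl⟩) <;>
          · rw [SetLike.mem_coe, AddMonoidHom.mem_ker, AddMonoidHom.comp_apply]
            simp only [map_sub, map_add, map_smul, FreeAbelianGroup.lift_apply_of]
            simp only [← map_sub]
            rw [QuotientAddGroup.mk'_apply, QuotientAddGroup.eq_zero_iff]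
            apply AddSubgroup.subset_closure
            first
              | exact Or.inl (Or.inl ⟨f m, f m', a, rfl⟩)
              | exact Or.inl (Or.inr ⟨f m, a, a', rfl⟩)
              | exact Or.inr ⟨f m, s, a, rfl⟩
      exact AddMonoidHom.mem_ker.mp (hle hx))


namespace Statement8Aux

set_option linter.unusedSectionVars false

open MulOpposite

section lift

variable {K : Type u} [Ring K] {M : Type u} [AddCommGroup M] [Module Kᵐᵒᵖ M]
  {A : Type u} [AddCommGroup A] [Module K A]

def tmk (m : M) (a : A) : Tens K M A :=
  QuotientAddGroup.mk (FreeAbelianGroup.of (m, a))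

lemma mk_rel_zero {x : FreeAbelianGroup (M × A)} (hx : x ∈ tensRels K M A) :
    (QuotientAddGroup.mk x : Tens K M A) = 0 :=
  (QuotientAddGroup.eq_zero_iff x).mpr hx

lemma tmk_add_left (m m' : M) (a : A) :
    tmk (K := K) (m + m') a = tmk m a + tmk m' a := by
  have h := mk_rel_zero (K := K) (AddSubgroup.subset_closure
    (Or.inl (Or.inl ⟨m, m', a, rfl⟩)))
  rw [QuotientAddGroup.mk_sub, QuotientAddGroup.mk_sub, sub_sub, sub_eq_zero] at h
  exact h

lemma tmk_add_right (m : M) (a a' : A) :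
    tmk (K := K) m (a + a') = tmk m a + tmk m a' := by
  have h := mk_rel_zero (K := K) (AddSubgroup.subset_closure
    (Or.inl (Or.inr ⟨m, a, a', rfl⟩)))
  rw [QuotientAddGroup.mk_sub, QuotientAddGroup.mk_sub, sub_sub, sub_eq_zero] at h
  exact h

lemma tmk_smul (m : M) (s : K) (a : A) :
    tmk (K := K) (op s • m) a = tmk m (s • a) := by
  have h := mk_rel_zero (K := K) (AddSubgroup.subset_closure
    (Or.inr ⟨m, s, a, rfl⟩))
  rw [QuotientAddGroup.mk_sub, sub_eq_zero] at h
  exact h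

def tmkHom (m : M) : A →+ Tens K M A :=
  AddMonoidHom.mk' (fun a => tmk m a) (fun a a' => tmk_add_right m a a')

@[simp] lemma tmkHom_apply (m : M) (a : A) : tmkHom (K := K) m a = tmk m a := rfl

def lift {B : Type u} [AddCommGroup B] (h : M → A → B)
    (h1 : ∀ m m' a, h (m + m') a = h m a + h m' a)
    (h2 : ∀ m a a', h m (a + a') = h m a + h m a')
    (h3 : ∀ (m : M) (s : K) (a : A), h (op s • m) a = h m (s • a)) :
    Tens K M A →+ B :=
  QuotientAddGroup.lift _ (FreeAbelianGroup.lift fun p => h p.1 p.2) (by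
    intro x hx
    have hle : tensRels K M A ≤ (FreeAbelianGroup.lift fun p : M × A => h p.1 p.2).ker := by
      refine (AddSubgroup.closure_le _).mpr ?_
      rintro y ((⟨m, m', a, rfl⟩ | ⟨m, a, a', rfl⟩) | ⟨m, s, a, rfl⟩) <;>
        · rw [SetLike.mem_coe, AddMonoidHom.mem_ker]
          simp only [map_sub, FreeAbelianGroup.lift_apply_of, h1, h2, h3]
          abel
    exact AddMonoidHom.mem_ker.mp (hle hx))

@[simp] lemma lift_tmk {B : Type u} [AddCommGroup B] (h : M → A → B)
    (h1 : ∀ m m' a, h (m + m') a = h m a + h m' a)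
    (h2 : ∀ m a a', h m (a + a') = h m a + h m a')
    (h3 : ∀ (m : M) (s : K) (a : A), h (op s • m) a = h m (s • a)) (m : M) (a : A) :
    lift h h1 h2 h3 (tmk m a) = h m a := by
  unfold lift tmk
  show (FreeAbelianGroup.lift fun p : M × A => h p.1 p.2) (FreeAbelianGroup.of (m, a)) = h m a
  exact FreeAbelianGroup.lift_apply_of _ _

lemma hom_ext {B : Type u} [AddCommGroup B] {φ ψ : Tens K M A →+ B}
    (H : ∀ m a, φ (tmk m a) = ψ (tmk m a)) : φ = ψ := by
  refine AddMonoidHom.ext fun x => ?_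
  refine QuotientAddGroup.induction_on x ?_
  intro z
  refine FreeAbelianGroup.induction_on z ?_ ?_ ?_ ?_
  · simp
  · intro p; exact H p.1 p.2
  · intro p hp
    have : ((-FreeAbelianGroup.of p : FreeAbelianGroup (M × A)) : Tens K M A)
        = -(FreeAbelianGroup.of p : FreeAbelianGroup (M × A)) := rfl
    rw [this, map_neg, map_neg, hp]
  · intro x y hx hy
    have : ((x + y : FreeAbelianGroup (M × A)) : Tens K M A)
        = (x : Tens K M A) + (y : Tens K M A) := rfl
    rw [this, map_add, map_add, hx, hy]

lemma map_tmk {M' : Type u} [AddCommGroup M'] [Module Kᵐᵒᵖ M']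
    (f : M →ₗ[Kᵐᵒᵖ] M') (m : M) (a : A) :
    Tens.map K f A (tmk m a) = tmk (f m) a := rfl

def map2 {A' : Type u} [AddCommGroup A'] [Module K A'] (f : A →ₗ[K] A') :
    Tens K M A →+ Tens K M A' :=
  lift (fun m a => tmk m (f a))
    (fun m m' a => tmk_add_left m m' (f a))
    (fun m a a' => by
      show tmk m (f (a + a')) = tmk m (f a) + tmk m (f a')
      rw [map_add, tmk_add_right])
    (fun m s a => by
      show tmk (op s • m) (f a) = tmk m (f (s • a))
      rw [tmk_smul, map_smul])

@[simp] lemma map2_tmk {A' : Type u} [AddCommGroup A'] [Module K A'] (f : A →ₗ[K] A')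
    (m : M) (a : A) : map2 (M := M) f (tmk m a) = tmk m (f a) := by
  unfold map2
  exact lift_tmk _ _ _ _ m a

end lift

section main

variable {R : Type u} [Ring R] {S' : Subring R}
  {A : Type u} [AddCommGroup A] [Module ↥S' A]
  {Q : Type u} [AddCommGroup Q] [Module R Q]
  {t : R → A → Q}
  (ht1 : ∀ r r' a, t (r + r') a = t r a + t r' a)
  (ht2 : ∀ r a a', t r (a + a') = t r a + t r a')
  (ht3 : ∀ (r : R) (s : S') (a : A), t (r * (s : R)) a = t r (s • a))
  (ht4 : ∀ (r' r : R) (a : A), t (r' * r) a = r' • t r a)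
  (huniv : ∀ (B : Type u) (_ : AddCommGroup B) (g : R → A → B),
      (∀ r r' a, g (r + r') a = g r a + g r' a) →
      (∀ r a a', g r (a + a') = g r a + g r a') →
      (∀ (r : R) (s : S') (a : A), g (r * (s : R)) a = g r (s • a)) →
      ∃! φ : Q →+ B, ∀ r a, φ (t r a) = g r a)

include ht1 ht2 ht3 huniv in
lemma uniq {B : Type u} [AddCommGroup B] (ψ₁ ψ₂ : Q →+ B)
    (h : ∀ r a, ψ₁ (t r a) = ψ₂ (t r a)) : ψ₁ = ψ₂ := by
  obtain ⟨φ, -, hu⟩ := huniv B ‹AddCommGroup B› (fun r a => ψ₁ (t r a))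
    (fun r r' a => by show ψ₁ (t (r + r') a) = ψ₁ (t r a) + ψ₁ (t r' a); rw [ht1, map_add])
    (fun r a a' => by show ψ₁ (t r (a + a')) = ψ₁ (t r a) + ψ₁ (t r a'); rw [ht2, map_add])
    (fun r s a => by show ψ₁ (t (r * (s : R)) a) = ψ₁ (t r (s • a)); rw [ht3])
  rw [hu ψ₁ (fun r a => rfl), hu ψ₂ (fun r a => (h r a).symm)]

variable {M : Type u} [AddCommGroup M] [Module Rᵐᵒᵖ M] [Module (↥S')ᵐᵒᵖ M]

include ht1 ht2 ht3 huniv in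
lemma phi_ex (hres : ∀ (s : S') (x : M), (op s) • x = (op (s : R)) • x) (m : M) :
    ∃! φ : Q →+ Tens ↥S' M A, ∀ r a, φ (t r a) = tmk (op r • m) a :=
  huniv (Tens ↥S' M A) inferInstance (fun r a => tmk (op r • m) a)
    (fun r r' a => by
      show tmk (op (r + r') • m) a = tmk (op r • m) a + tmk (op r' • m) a
      rw [op_add, add_smul, tmk_add_left])
    (fun r a a' => tmk_add_right _ a a')
    (fun r s a => by
      show tmk (op (r * (s : R)) • m) a = tmk (op r • m) ((s : ↥S') • a)
      rw [op_mul, mul_smul, ← hres, tmk_smul])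

include ht1 ht2 ht3 huniv in
def phi (hres : ∀ (s : S') (x : M), (op s) • x = (op (s : R)) • x) (m : M) :
    Q →+ Tens ↥S' M A :=
  (phi_ex ht1 ht2 ht3 huniv hres m).choose

include ht1 ht2 ht3 huniv in
lemma phi_t (hres : ∀ (s : S') (x : M), (op s) • x = (op (s : R)) • x)
    (m : M) (r : R) (a : A) :
    phi ht1 ht2 ht3 huniv hres m (t r a) = tmk (op r • m) a :=
  (phi_ex ht1 ht2 ht3 huniv hres m).choose_spec.1 r a

include ht1 ht2 ht3 ht4 huniv in
def theta (hres : ∀ (s : S') (x : M), (op s) • x = (op (s : R)) • x) :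
    Tens R M Q →+ Tens ↥S' M A :=
  lift (fun m q => phi ht1 ht2 ht3 huniv hres m q)
    (fun m m' q => by
      have h : phi ht1 ht2 ht3 huniv hres (m + m')
          = phi ht1 ht2 ht3 huniv hres m + phi ht1 ht2 ht3 huniv hres m' := by
        refine uniq ht1 ht2 ht3 huniv _ _ fun r a => ?_
        rw [phi_t, AddMonoidHom.add_apply, phi_t, phi_t, smul_add, tmk_add_left]
      exact DFunLike.congr_fun h q)
    (fun m q q' => by
      show phi ht1 ht2 ht3 huniv hres m (q + q') = _
      rw [map_add])
    (fun m r q => by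
      have h : phi ht1 ht2 ht3 huniv hres (op r • m)
          = (phi ht1 ht2 ht3 huniv hres m).comp (DistribMulAction.toAddMonoidHom Q r) := by
        refine uniq ht1 ht2 ht3 huniv _ _ fun r' a => ?_
        show _ = phi ht1 ht2 ht3 huniv hres m (r • t r' a)
        rw [← ht4, phi_t, phi_t, ← mul_smul, ← op_mul]
      exact DFunLike.congr_fun h q)

include ht1 ht2 ht3 ht4 huniv in
lemma theta_tmk (hres : ∀ (s : S') (x : M), (op s) • x = (op (s : R)) • x)
    (m : M) (q : Q) :
    theta ht1 ht2 ht3 ht4 huniv hres (tmk m q) = phi ht1 ht2 ht3 huniv hres m q := by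
  unfold theta
  exact lift_tmk _ _ _ _ m q

include ht2 ht3 ht4 in
def eta (hres : ∀ (s : S') (x : M), (op s) • x = (op (s : R)) • x) :
    Tens ↥S' M A →+ Tens R M Q :=
  lift (fun m a => tmk m (t 1 a))
    (fun m m' a => tmk_add_left m m' _)
    (fun m a a' => by
      show tmk m (t 1 (a + a')) = tmk m (t 1 a) + tmk m (t 1 a')
      rw [ht2, tmk_add_right])
    (fun m s a => by
      show tmk (op s • m) (t 1 a) = tmk m (t 1 ((s : ↥S') • a))
      rw [hres, tmk_smul, ← ht4, mul_one, ← ht3, one_mul])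

include ht2 ht3 ht4 in
lemma eta_tmk (hres : ∀ (s : S') (x : M), (op s) • x = (op (s : R)) • x)
    (m : M) (a : A) :
    eta ht2 ht3 ht4 hres (tmk m a) = tmk m (t 1 a) := by
  unfold eta
  exact lift_tmk _ _ _ _ m a

include ht1 ht2 ht3 huniv in
lemma ext2 {B : Type u} [AddCommGroup B] {Φ Ψ : Tens R M Q →+ B}
    (H : ∀ (m : M) (r : R) (a : A), Φ (tmk m (t r a)) = Ψ (tmk m (t r a))) : Φ = Ψ :=
  hom_ext fun m q => DFunLike.congr_fun
    (uniq ht1 ht2 ht3 huniv (Φ.comp (tmkHom m)) (Ψ.comp (tmkHom m))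
      (fun r a => H m r a)) q

include ht1 ht2 ht3 ht4 huniv in
lemma eta_theta (hres : ∀ (s : S') (x : M), (op s) • x = (op (s : R)) • x)
    (x : Tens R M Q) :
    eta ht2 ht3 ht4 hres (theta ht1 ht2 ht3 ht4 huniv hres x) = x := by
  have h : (eta ht2 ht3 ht4 hres (M := M)).comp (theta ht1 ht2 ht3 ht4 huniv hres)
      = AddMonoidHom.id _ := by
    refine ext2 ht1 ht2 ht3 huniv fun m r a => ?_
    show eta ht2 ht3 ht4 hres (theta ht1 ht2 ht3 ht4 huniv hres (tmk m (t r a)))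
        = tmk m (t r a)
    rw [theta_tmk, phi_t, eta_tmk, tmk_smul, ← ht4, mul_one]
  exact DFunLike.congr_fun h x

end main

lemma exact_of_retract {X₂ X₁ X₀ Y₂ Y₁ Y₀ : Type u}
    [AddCommGroup X₂] [AddCommGroup X₁] [AddCommGroup X₀]
    [AddCommGroup Y₂] [AddCommGroup Y₁] [AddCommGroup Y₀]
    (f : X₂ →+ X₁) (g : X₁ →+ X₀) (f' : Y₂ →+ Y₁) (g' : Y₁ →+ Y₀)
    (s₂ : Y₂ →+ X₂) (s₁ : Y₁ →+ X₁) (s₀ : Y₀ →+ X₀)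
    (r₂ : X₂ →+ Y₂) (r₁ : X₁ →+ Y₁) (r₀ : X₀ →+ Y₀)
    (hex : Function.Exact ⇑f ⇑g)
    (hrs : ∀ y, r₁ (s₁ y) = y)
    (hs2 : ∀ y, f (s₂ y) = s₁ (f' y))
    (hs1 : ∀ y, g (s₁ y) = s₀ (g' y))
    (hr2 : ∀ x, f' (r₂ x) = r₁ (f x))
    (hr1 : ∀ x, g' (r₁ x) = r₀ (g x)) :
    Function.Exact ⇑f' ⇑g' := by
  intro y
  constructor
  · intro hy
    have h1 : g (s₁ y) = 0 := by rw [hs1, hy, map_zero]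
    obtain ⟨x, hx⟩ := (hex (s₁ y)).mp h1
    exact ⟨r₂ x, by rw [hr2, hx, hrs]⟩
  · rintro ⟨z, rfl⟩
    calc g' (f' z) = g' (r₁ (s₁ (f' z))) := by rw [hrs]
    _ = g' (r₁ (f (s₂ z))) := by rw [hs2]
    _ = r₀ (g (f (s₂ z))) := hr1 _
    _ = 0 := by rw [hex.apply_apply_eq_zero, map_zero]

end Statement8Aux

open Statement8Aux MulOpposite
theorem statement8 (R : Type u) [Ring R] (S : Subring R)
    (C : ℤ → Type u) [∀ n, AddCommGroup (C n)] [∀ n, Module Rᵐᵒᵖ (C n)]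
    -- the right `S`-module structure on each `C n`, restricting the `R`-module structure
    [∀ n, Module (↥S)ᵐᵒᵖ (C n)]
    (hres : ∀ (n : ℤ) (s : S) (x : C n),
      (MulOpposite.op s) • x = (MulOpposite.op (s : R)) • x)
    -- the differential, and the same map viewed as `S`-linear
    (d : ∀ n : ℤ, C (n + 1) →ₗ[Rᵐᵒᵖ] C n)
    (dS : ∀ n : ℤ, C (n + 1) →ₗ[(↥S)ᵐᵒᵖ] C n)
    (hdS : ∀ (n : ℤ) (x : C (n + 1)), dS n x = d n x)
    (hcomplex : ∀ n : ℤ, (d n) ∘ₗ (d (n + 1)) = 0)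
    -- `C` is pure acyclic as a complex of right `S`-modules:
    -- `C ⊗_S A` is acyclic for every left `S`-module `A`
    (hpure : ∀ (A : Type u) [AddCommGroup A] [Module ↥S A], ∀ n : ℤ,
      Function.Exact (Tens.map ↥S (dS (n + 1)) A) (Tens.map ↥S (dS n) A))
    -- `P` is a left `R`-module which is a direct summand of a module of the
    -- form `R ⊗_S A`, the latter encoded by its universal property
    (P : Type u) [AddCommGroup P] [Module R P]
    (hP : ∃ (A : Type u) (_ : AddCommGroup A) (_ : Module ↥S A)
        (Q : Type u) (_ : AddCommGroup Q) (_ : Module R Q) (t : R → A → Q),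
        (∀ r r' a, t (r + r') a = t r a + t r' a) ∧
        (∀ r a a', t r (a + a') = t r a + t r a') ∧
        (∀ (r : R) (s : S) (a : A), t (r * (s : R)) a = t r (s • a)) ∧
        (∀ (r' r : R) (a : A), t (r' * r) a = r' • t r a) ∧
        (∀ (B : Type u) (_ : AddCommGroup B) (g : R → A → B),
          (∀ r r' a, g (r + r') a = g r a + g r' a) →
          (∀ r a a', g r (a + a') = g r a + g r a') →
          (∀ (r : R) (s : S) (a : A), g (r * (s : R)) a = g r (s • a)) →
          ∃! φ : Q →+ B, ∀ r a, φ (t r a) = g r a) ∧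
        (∃ (pr : Q →ₗ[R] P) (sec : P →ₗ[R] Q), pr ∘ₗ sec = LinearMap.id)) :
    -- conclusion: `C ⊗_R P` is acyclic
    ∀ n : ℤ, Function.Exact (Tens.map R (d (n + 1)) P) (Tens.map R (d n) P) := by
  obtain ⟨A, _, _, Q, _, _, t, ht1, ht2, ht3, ht4, huniv, pr, sec, hps⟩ := hP
  have hps' : ∀ p : P, pr (sec p) = p := fun p => LinearMap.congr_fun hps p
  -- naturality of `theta` with respect to the differentials
  have hθ : ∀ (k : ℤ),
      (Tens.map ↥S (dS k) A).comp (theta ht1 ht2 ht3 ht4 huniv (hres (k + 1)))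
        = (theta ht1 ht2 ht3 ht4 huniv (hres k)).comp (Tens.map R (d k) Q) := by
    intro k
    refine ext2 ht1 ht2 ht3 huniv fun m r a => ?_
    show Tens.map ↥S (dS k) A
        (theta ht1 ht2 ht3 ht4 huniv (hres (k + 1)) (tmk m (t r a)))
      = theta ht1 ht2 ht3 ht4 huniv (hres k) (Tens.map R (d k) Q (tmk m (t r a)))
    rw [theta_tmk, phi_t, map_tmk, map_tmk, theta_tmk, phi_t, hdS, map_smul]
  -- naturality of `eta`
  have hη : ∀ (k : ℤ),
      (Tens.map R (d k) Q).comp (eta ht2 ht3 ht4 (hres (k + 1)))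
        = (eta ht2 ht3 ht4 (hres k)).comp (Tens.map ↥S (dS k) A) := by
    intro k
    refine hom_ext fun m a => ?_
    show Tens.map R (d k) Q (eta ht2 ht3 ht4 (hres (k + 1)) (tmk m a))
      = eta ht2 ht3 ht4 (hres k) (Tens.map ↥S (dS k) A (tmk m a))
    rw [eta_tmk, map_tmk, map_tmk, eta_tmk, hdS]
  -- naturality of `map2`
  have hm2 : ∀ (k : ℤ) (U V : Type u) (iU1 : AddCommGroup U) (iU2 : Module R U)
      (iV1 : AddCommGroup V) (iV2 : Module R V) (f : U →ₗ[R] V),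
      (Tens.map R (d k) V).comp (map2 (M := C (k + 1)) f)
        = (map2 (M := C k) f).comp (Tens.map R (d k) U) := by
    intro k U V iU1 iU2 iV1 iV2 f
    refine hom_ext fun m u => ?_
    show Tens.map R (d k) V (map2 f (tmk m u)) = map2 f (Tens.map R (d k) U (tmk m u))
    rw [map2_tmk, map_tmk, map_tmk, map2_tmk]
  intro n
  refine exact_of_retract
    (Tens.map ↥S (dS (n + 1)) A) (Tens.map ↥S (dS n) A)
    (Tens.map R (d (n + 1)) P) (Tens.map R (d n) P)
    ((theta ht1 ht2 ht3 ht4 huniv (hres (n + 1 + 1))).comp (map2 sec))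
    ((theta ht1 ht2 ht3 ht4 huniv (hres (n + 1))).comp (map2 sec))
    ((theta ht1 ht2 ht3 ht4 huniv (hres n)).comp (map2 sec))
    ((map2 pr).comp (eta ht2 ht3 ht4 (hres (n + 1 + 1))))
    ((map2 pr).comp (eta ht2 ht3 ht4 (hres (n + 1))))
    ((map2 pr).comp (eta ht2 ht3 ht4 (hres n)))
    (hpure A n) ?_ ?_ ?_ ?_ ?_
  · -- retraction: r₁ ∘ s₁ = id
    intro y
    show map2 pr (eta ht2 ht3 ht4 (hres (n + 1))
        (theta ht1 ht2 ht3 ht4 huniv (hres (n + 1)) (map2 sec y))) = y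
    rw [eta_theta]
    have h : (map2 (M := C (n + 1)) pr).comp (map2 (M := C (n + 1)) sec)
        = AddMonoidHom.id _ := by
      refine hom_ext fun m p => ?_
      show map2 pr (map2 sec (tmk m p)) = tmk m p
      rw [map2_tmk, map2_tmk, hps']
    exact DFunLike.congr_fun h y
  · -- f ∘ s₂ = s₁ ∘ f'
    intro y
    have h1 := DFunLike.congr_fun (hθ (n + 1)) (map2 (M := C (n + 1 + 1)) sec y)
    have h2 := DFunLike.congr_fun
      (hm2 (n + 1) P Q inferInstance inferInstance inferInstance inferInstance sec) y
    simp only [AddMonoidHom.comp_apply] at h1 h2 ⊢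
    rw [h1, h2]
  · -- g ∘ s₁ = s₀ ∘ g'
    intro y
    have h1 := DFunLike.congr_fun (hθ n) (map2 (M := C (n + 1)) sec y)
    have h2 := DFunLike.congr_fun
      (hm2 n P Q inferInstance inferInstance inferInstance inferInstance sec) y
    simp only [AddMonoidHom.comp_apply] at h1 h2 ⊢
    rw [h1, h2]
  · -- f' ∘ r₂ = r₁ ∘ f
    intro x
    have h1 := DFunLike.congr_fun (hη (n + 1)) x
    have h2 := DFunLike.congr_fun
      (hm2 (n + 1) Q P inferInstance inferInstance inferInstance inferInstance pr)
      (eta ht2 ht3 ht4 (hres (n + 1 + 1)) x)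
    simp only [AddMonoidHom.comp_apply] at h1 h2 ⊢
    rw [h2, h1]
  · -- g' ∘ r₁ = r₀ ∘ g
    intro x
    have h1 := DFunLike.congr_fun (hη n) x
    have h2 := DFunLike.congr_fun
      (hm2 n Q P inferInstance inferInstance inferInstance inferInstance pr)
      (eta ht2 ht3 ht4 (hres (n + 1)) x)
    simp only [AddMonoidHom.comp_apply] at h1 h2 ⊢
    rw [h2, h1]

end
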